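/- Let π ∈ S_NC(r,s,t) and let σ ∈ S_n satisfy: (1) σ ≤ π_⃗n, and (2) for each cycle C̃ of π_⃗n, the restriction σ|_{C̃} is non-crossing in NC(C̃) and (σ|_{C̃})⁻¹ · γ|_{C̃} separates the points of N ∩ C̃ (where γ|_{C̃} is the cycle of π_⃗n viewed via the order inherited from γ). Then σ ∈ S_NC(p,q,l) and σ⁻¹π_⃗n separates the points of N = {n₁, n₁+n₂, …, n}. -/

import Mathlib

open Equiv

namespace ThirdOrderFree

variable {α : Type*}

/-- The setoid whose classes are the cycles (orbits) of a permutation. -/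
def sameCycleSetoid (σ : Perm α) : Setoid α :=
  ⟨σ.SameCycle,
    ⟨fun x => Equiv.Perm.SameCycle.refl σ x, fun h => h.symm, fun h h' => h.trans h'⟩⟩

/-- Number of cycles (orbits, including fixed points) of a permutation. -/
noncomputable def numCycles (σ : Perm α) : ℕ :=
  Nat.card (Quotient (sameCycleSetoid σ))

/-- The length `|σ| = n - #(σ)`. -/
noncomputable def len (σ : Perm α) : ℕ :=
  Nat.card α - numCycles σ

/-- Join of the cycle partitions of two permutations. -/
def joinSetoid (π σ : Perm α) : Setoid α :=
  sameCycleSetoid π ⊔ sameCycleSetoid σ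

/-- Number of blocks of `π ∨ σ`. -/
noncomputable def numBlocks (π σ : Perm α) : ℕ :=
  Nat.card (Quotient (joinSetoid π σ))

/-- `π ∨ σ` is the one-block partition. -/
def JoinTop (π σ : Perm α) : Prop :=
  ∀ x y : α, (joinSetoid π σ).r x y

/-- `π` is a non-crossing (annular) permutation with respect to `γ`. -/
def SNC (γ π : Perm α) : Prop :=
  JoinTop π γ ∧
    numCycles π + numCycles (π⁻¹ * γ) + numCycles γ = Nat.card α + 2

/-- `τ` separates the points of `N`: no cycle of `τ` contains two distinct points of `N`. -/
def Separates (τ : Perm α) (N : Set α) : Prop :=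
  ∀ x ∈ N, ∀ y ∈ N, τ.SameCycle x y → x = y

/-- The first-return map of `σ` on the set `{x | p x}`. -/
noncomputable def firstReturn (σ : Perm α) (p : α → Prop) (x : α) : α :=
  (σ ^ sInf {k : ℕ | 0 < k ∧ p ((σ ^ k) x)}) x

open Classical in
/-- The restriction of `σ` to `{x | p x}`: the unique permutation agreeing with the
first-return map (it exists whenever `α` is finite). -/
noncomputable def restrictPerm (σ : Perm α) (p : α → Prop) : Perm {x // p x} :=
  if h : ∃ e : Perm {x // p x}, ∀ x : {x // p x}, (e x : α) = firstReturn σ p (x : α)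
  then h.choose else 1

/-- `π ≤ σ` : each cycle of `π` is contained in a cycle of `σ` and on each cycle of
`σ` the restriction of `π` is a non-crossing permutation of that cycle. -/
def le' (π σ : Perm α) : Prop :=
  (∀ x y : α, π.SameCycle x y → σ.SameCycle x y) ∧
  ∀ x : α,
    numCycles (restrictPerm π (σ.SameCycle x)) +
      numCycles ((restrictPerm π (σ.SameCycle x))⁻¹ * restrictPerm σ (σ.SameCycle x)) =
      Nat.card {y // σ.SameCycle x y} + 1

/-- `π ≲ σ` : on each block of `π ∨ σ`, `π` is annular non-crossing w.r.t. `σ`. -/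
def ncRel (π σ : Perm α) : Prop :=
  ∀ x : α,
    SNC (restrictPerm σ ((joinSetoid π σ).r x)) (restrictPerm π ((joinSetoid π σ).r x))

/-- The permutation of `Σ i, Fin (n i)` rotating each block: the product of the
directed cycles `T i` of lengths `n i`. -/
def blockRotate {ι : Type*} (n : ι → ℕ) : Perm ((i : ι) × Fin (n i)) :=
  Equiv.sigmaCongrRight fun i => finRotate (n i)

/-- The first elements of the blocks. -/
def zeroSection {ι : Type*} (n : ι → ℕ) (hn : ∀ i, 0 < n i) :
    ι ≃ {x : (i : ι) × Fin (n i) // x.2.val = 0} where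
  toFun i := ⟨⟨i, ⟨0, hn i⟩⟩, rfl⟩
  invFun x := x.1.1
  left_inv i := rfl
  right_inv := fun x => by
    obtain ⟨⟨i, j⟩, hj⟩ := x
    exact Subtype.ext (congrArg (Sigma.mk i) (Fin.ext hj.symm))

/-- `π_{\vec n}` : merge the blocks `T i` along the cycles of `π`; within a block it
moves forward, and the last element of block `i` is sent to the first element of
block `π i`. -/
def mergePerm {ι : Type*} (n : ι → ℕ) (hn : ∀ i, 0 < n i) (π : Perm ι) :
    Perm ((i : ι) × Fin (n i)) :=
  (π.extendDomain (zeroSection n hn)) * blockRotate n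


/-! ### Auxiliary general lemmas -/

section Aux

variable {β : Type*}

lemma sameCycle_iff_exists_pow [Finite β] (f : Perm β) (x y : β) :
    f.SameCycle x y ↔ ∃ k : ℕ, (f ^ k) x = y := by
  constructor
  · intro h
    obtain ⟨i, _, hi⟩ := h.exists_pow_eq'
    exact ⟨i, hi⟩
  · rintro ⟨k, hk⟩
    exact ⟨(k : ℤ), by simpa [zpow_natCast] using hk⟩

lemma firstReturn_eq_apply [Finite β] (σ : Perm β) (p : β → Prop)
    (hp : ∀ x, p x ↔ p (σ x)) (x : β) (hx : p x) : firstReturn σ p x = σ x := by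
  have h1 : (1 : ℕ) ∈ {k : ℕ | 0 < k ∧ p ((σ ^ k) x)} :=
    ⟨one_pos, by simpa [pow_one] using (hp x).1 hx⟩
  have hne : {k : ℕ | 0 < k ∧ p ((σ ^ k) x)}.Nonempty := ⟨1, h1⟩
  have h0 : (0 : ℕ) ∉ {k : ℕ | 0 < k ∧ p ((σ ^ k) x)} := by
    simp [Set.mem_setOf_eq]
  have hInf : sInf {k : ℕ | 0 < k ∧ p ((σ ^ k) x)} = 1 := by
    refine le_antisymm (Nat.sInf_le h1) ?_
    rcases Nat.eq_zero_or_pos (sInf {k : ℕ | 0 < k ∧ p ((σ ^ k) x)}) with h | h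
    · have hmem := Nat.sInf_mem hne
      rw [h] at hmem
      exact absurd hmem h0
    · exact h
  simp [firstReturn, hInf]

lemma restrictPerm_eq_subtypePerm [Finite β] (σ : Perm β) (p : β → Prop)
    (hp : ∀ x, p x ↔ p (σ x)) :
    restrictPerm σ p = σ.subtypePerm (fun x => (hp x).symm) := by
  have hex : ∃ e : Perm {x // p x}, ∀ x : {x // p x}, (e x : β) = firstReturn σ p (x : β) :=
    ⟨σ.subtypePerm (fun x => (hp x).symm), fun x => by
      rw [firstReturn_eq_apply σ p hp x.1 x.2]; rfl⟩
  have hspec := hex.choose_spec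
  rw [restrictPerm, dif_pos hex]
  ext x
  rw [hspec x, firstReturn_eq_apply σ p hp x.1 x.2]
  rfl

lemma subtypePerm_sameCycle_iff [Finite β] (f : Perm β) (p : β → Prop)
    (hp : ∀ x, p x ↔ p (f x)) (x y : {a // p a}) :
    (f.subtypePerm (fun x => (hp x).symm)).SameCycle x y ↔ f.SameCycle x.1 y.1 := by
  constructor
  · rintro ⟨k, hk⟩
    refine ⟨k, ?_⟩
    rw [Equiv.Perm.subtypePerm_zpow] at hk
    simpa using congrArg Subtype.val hk
  · rintro ⟨k, hk⟩
    refine ⟨k, ?_⟩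
    rw [Equiv.Perm.subtypePerm_zpow]
    exact Subtype.ext hk

lemma _root_.Equiv.Perm.apply_inv_self (f : Perm β) (x : β) : f (f⁻¹ x) = x :=
  Equiv.apply_symm_apply f x

lemma _root_.Equiv.Perm.inv_apply_self (f : Perm β) (x : β) : f⁻¹ (f x) = x :=
  Equiv.symm_apply_apply f x

lemma conj_zpow_apply {γ : Type*} (e : β ≃ γ) (f : Perm β) (g : Perm γ)
    (h : ∀ x, e (f x) = g (e x)) : ∀ (k : ℤ) (x : β), e ((f ^ k) x) = (g ^ k) (e x) := by
  have h' : ∀ x, e (f⁻¹ x) = g⁻¹ (e x) := by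
    intro x
    have hh := h (f⁻¹ x)
    rw [Equiv.Perm.apply_inv_self] at hh
    rw [hh, Equiv.Perm.inv_apply_self]
  intro k
  induction k using Int.induction_on with
  | zero => simp
  | succ k ih =>
      intro x
      have e1 : (f ^ ((k : ℤ) + 1)) x = (f ^ (k : ℤ)) (f x) := by
        rw [zpow_add_one, Equiv.Perm.mul_apply]
      have e2 : (g ^ ((k : ℤ) + 1)) (e x) = (g ^ (k : ℤ)) (g (e x)) := by
        rw [zpow_add_one, Equiv.Perm.mul_apply]
      rw [e1, e2, ih (f x), h x]
  | pred k ih =>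
      intro x
      have e1 : (f ^ ((-k : ℤ) - 1)) x = (f ^ (-k : ℤ)) (f⁻¹ x) := by
        rw [zpow_sub_one, Equiv.Perm.mul_apply]
      have e2 : (g ^ ((-k : ℤ) - 1)) (e x) = (g ^ (-k : ℤ)) (g⁻¹ (e x)) := by
        rw [zpow_sub_one, Equiv.Perm.mul_apply]
      rw [e1, e2, ih (f⁻¹ x), h' x]

lemma sameCycle_congr {γ : Type*} (e : β ≃ γ) (f : Perm β) (g : Perm γ)
    (h : ∀ x, e (f x) = g (e x)) (x y : β) :
    f.SameCycle x y ↔ g.SameCycle (e x) (e y) := by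
  constructor
  · rintro ⟨k, hk⟩
    exact ⟨k, by rw [← conj_zpow_apply e f g h k x, hk]⟩
  · rintro ⟨k, hk⟩
    refine ⟨k, ?_⟩
    have := conj_zpow_apply e f g h k x
    rw [hk] at this
    exact e.injective this

lemma numCycles_congr {γ : Type*} (e : β ≃ γ) (f : Perm β) (g : Perm γ)
    (h : ∀ x, e (f x) = g (e x)) : numCycles f = numCycles g :=
  Nat.card_congr (Quotient.congr e (fun a b => sameCycle_congr e f g h a b))

lemma out_sameCycle [Finite β] (g : Perm β) (x : β) :
    g.SameCycle (Quotient.out (Quotient.mk (sameCycleSetoid g) x)) x :=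
  @Quotient.mk_out _ (sameCycleSetoid g) x

lemma mk_eq_of_mem_class [Finite β] (g : Perm β) (c : Quotient (sameCycleSetoid g)) (a : β)
    (ha : g.SameCycle (Quotient.out c) a) : c = Quotient.mk (sameCycleSetoid g) a :=
  (Quotient.out_eq c).symm.trans (Quotient.sound ha)

lemma class_invariant [Finite β] (f g : Perm β)
    (hfg : ∀ x y, f.SameCycle x y → g.SameCycle x y) (z : β) :
    ∀ x, g.SameCycle z x ↔ g.SameCycle z (f x) := by
  intro x
  have hx : g.SameCycle x (f x) := hfg x (f x) ⟨1, by simp⟩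
  exact ⟨fun h => h.trans hx, fun h => h.trans hx.symm⟩

lemma numCycles_eq_sum [Finite β] (f g : Perm β)
    (hfg : ∀ x y, f.SameCycle x y → g.SameCycle x y)
    [Fintype (Quotient (sameCycleSetoid g))] :
    numCycles f = ∑ c : Quotient (sameCycleSetoid g),
      numCycles (f.subtypePerm (fun x => (class_invariant f g hfg (Quotient.out c) x).symm)) := by
  classical
  set Q := Quotient (sameCycleSetoid g) with hQ
  let F : ∀ c : Q, Perm {y // g.SameCycle (Quotient.out c) y} := fun c =>
    f.subtypePerm (fun x => (class_invariant f g hfg (Quotient.out c) x).symm)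
  let S := Σ c : Q, Quotient (sameCycleSetoid (F c))
  let G : S → Quotient (sameCycleSetoid f) := fun z =>
    Quotient.lift
      (fun (y : {y // g.SameCycle (Quotient.out z.1) y}) =>
        (Quotient.mk (sameCycleSetoid f) y.1))
      (fun a b hab => Quotient.sound ((subtypePerm_sameCycle_iff f _
        (class_invariant f g hfg (Quotient.out z.1)) a b).1 hab)) z.2
  have hGsurj : Function.Surjective G := by
    intro q
    induction q using Quotient.inductionOn with
    | h x =>
      exact ⟨⟨Quotient.mk _ x, Quotient.mk _ ⟨x, out_sameCycle g x⟩⟩, rfl⟩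
  have hGinj : Function.Injective G := by
    rintro ⟨c, q⟩ ⟨c', q'⟩ h
    induction q using Quotient.inductionOn with
    | h a =>
      induction q' using Quotient.inductionOn with
      | h b =>
        have hab : f.SameCycle a.1 b.1 := Quotient.exact h
        have hcc : c = c' :=
          (mk_eq_of_mem_class g c a.1 a.2).trans
            ((Quotient.sound (hfg _ _ hab)).trans (mk_eq_of_mem_class g c' b.1 b.2).symm)
        subst hcc
        exact congrArg (Sigma.mk c)
          (Quotient.sound ((subtypePerm_sameCycle_iff f _
            (class_invariant f g hfg (Quotient.out c)) a b).2 hab))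
  let e : S ≃ Quotient (sameCycleSetoid f) := Equiv.ofBijective G ⟨hGinj, hGsurj⟩
  letI : ∀ c : Q, Fintype (Quotient (sameCycleSetoid (F c))) := fun c => Fintype.ofFinite _
  have h1 : numCycles f = Nat.card S := (Nat.card_congr e).symm
  rw [h1, Nat.card_eq_fintype_card, Fintype.card_sigma]
  exact Finset.sum_congr (by congr!) fun c _ => (Nat.card_eq_fintype_card).symm

lemma card_eq_sum_classes [Finite β] (g : Perm β)
    [Fintype (Quotient (sameCycleSetoid g))] :
    Nat.card β = ∑ c : Quotient (sameCycleSetoid g),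
      Nat.card {y // g.SameCycle (Quotient.out c) y} := by
  classical
  set Q := Quotient (sameCycleSetoid g) with hQ
  let S := Σ c : Q, {y // g.SameCycle (Quotient.out c) y}
  let G : S → β := fun z => z.2.1
  have hGsurj : Function.Surjective G := fun x =>
    ⟨⟨Quotient.mk _ x, ⟨x, out_sameCycle g x⟩⟩, rfl⟩
  have hGinj : Function.Injective G := by
    rintro ⟨c, a⟩ ⟨c', b⟩ h
    have hcc : c = c' :=
      (mk_eq_of_mem_class g c a.1 a.2).trans
        ((congrArg _ h).trans (mk_eq_of_mem_class g c' b.1 b.2).symm)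
    subst hcc
    exact congrArg (Sigma.mk c) (Subtype.ext h)
  letI : ∀ c : Q, Fintype {y // g.SameCycle (Quotient.out c) y} := fun c => Fintype.ofFinite _
  have h1 : Nat.card β = Nat.card S :=
    (Nat.card_congr (Equiv.ofBijective G ⟨hGinj, hGsurj⟩)).symm
  rw [h1, Nat.card_eq_fintype_card, Fintype.card_sigma]
  exact Finset.sum_congr (by congr!) fun c _ => (Nat.card_eq_fintype_card).symm

lemma numCycles_eq_card_univ [Finite β] (g : Perm β)
    [Fintype (Quotient (sameCycleSetoid g))] :
    numCycles g = ∑ _c : Quotient (sameCycleSetoid g), 1 := by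
  simp [numCycles, Nat.card_eq_fintype_card]

end Aux

/-! ### Cut-and-join: multiplying by a permutation supported on a separated set -/

section CutJoin

variable {β : Type*} [Finite β] (τ ρ : Perm β) (N : Set β)

lemma sc_pow_right (f : Perm β) (x : β) (k : ℕ) : f.SameCycle x ((f ^ k) x) :=
  (sameCycle_iff_exists_pow f x _).2 ⟨k, rfl⟩

lemma sc_apply_left (f : Perm β) (w : β) : f.SameCycle (f w) w := by
  have h := sc_pow_right f w 1
  rw [pow_one] at h
  exact h.symm

lemma mem_of_apply_mem (hsupp : ∀ x ∉ N, ρ x = x) {x : β} (hx : x ∈ N) : ρ x ∈ N := by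
  by_contra h
  have h3 : ρ (ρ x) = ρ x := hsupp _ h
  have h4 : ρ x = x := ρ.injective h3
  exact h (by rw [h4]; exact hx)

lemma inv_supp (hsupp : ∀ x ∉ N, ρ x = x) : ∀ x ∉ N, ρ⁻¹ x = x := by
  intro x hx
  have := hsupp x hx
  conv_lhs => rw [← this]
  exact Equiv.Perm.inv_apply_self ρ x

lemma pow_mem (hsupp : ∀ x ∉ N, ρ x = x) {x : β} (hx : x ∈ N) :
    ∀ j : ℕ, (ρ ^ j) x ∈ N := by
  intro j
  induction j with
  | zero => simpa using hx
  | succ j ih =>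
      have : (ρ ^ (j + 1)) x = ρ ((ρ ^ j) x) := by
        rw [pow_succ', Equiv.Perm.mul_apply]
      rw [this]
      exact mem_of_apply_mem ρ N hsupp ih

lemma mem_iff_apply_mem (hsupp : ∀ x ∉ N, ρ x = x) :
    ∀ x : β, x ∈ N ↔ ρ x ∈ N := by
  intro x
  constructor
  · exact mem_of_apply_mem ρ N hsupp
  · intro h
    by_contra hx
    rw [hsupp x hx] at h
    exact hx h

lemma core_traverse (hsep : Separates τ N) (hsupp : ∀ x ∉ N, ρ x = x)
    {x : β} (hx : x ∈ N) : ∀ y, τ.SameCycle (ρ x) y → (τ * ρ).SameCycle x y := by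
  set z := ρ x with hz
  have hzN : z ∈ N := mem_of_apply_mem ρ N hsupp hx
  have hPne : {k : ℕ | 0 < k ∧ (τ ^ k) z = z}.Nonempty := by
    refine ⟨orderOf τ, orderOf_pos τ, ?_⟩
    rw [pow_orderOf_eq_one]
    rfl
  set m := sInf {k : ℕ | 0 < k ∧ (τ ^ k) z = z} with hmdef
  obtain ⟨hm0, hmz⟩ := Nat.sInf_mem hPne
  have hlt : ∀ k, 0 < k → k < m → (τ ^ k) z ≠ z := by
    intro k hk0 hkm hkz
    have hmem : k ∈ {k : ℕ | 0 < k ∧ (τ ^ k) z = z} := ⟨hk0, hkz⟩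
    have := Nat.sInf_le hmem
    omega
  have claimA : ∀ k, 0 < k → k ≤ m → ((τ * ρ) ^ k) x = (τ ^ k) z := by
    intro k
    induction k with
    | zero => intro h; exact absurd h (by omega)
    | succ k ih =>
        intro _ hk1
        rcases Nat.eq_zero_or_pos k with hk | hk
        · subst hk
          simp [Equiv.Perm.mul_apply, hz]
        · have ihk := ih hk (by omega)
          have hstep : ((τ * ρ) ^ (k + 1)) x = (τ * ρ) (((τ * ρ) ^ k) x) := by
            rw [pow_succ', Equiv.Perm.mul_apply]
          have hnotN : (τ ^ k) z ∉ N := by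
            intro hmem
            have hsc : τ.SameCycle z ((τ ^ k) z) := sc_pow_right τ z k
            have := hsep z hzN _ hmem hsc
            exact hlt k hk (by omega) this.symm
          rw [hstep, ihk, Equiv.Perm.mul_apply, hsupp _ hnotN, ← Equiv.Perm.mul_apply,
            ← pow_succ']
  have claimB : ((τ * ρ) ^ m) x = z := (claimA m hm0 le_rfl).trans hmz
  have hperiod : ∀ q : ℕ, (τ ^ (m * q)) z = z := by
    intro q
    induction q with
    | zero => simp
    | succ q ih =>
        have : m * (q + 1) = m * q + m := by ring
        rw [this, pow_add, Equiv.Perm.mul_apply, hmz, ih]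
  intro y hy
  obtain ⟨k, hk⟩ := (sameCycle_iff_exists_pow τ z y).1 hy
  have hsplit : (τ ^ k) z = (τ ^ (k % m)) z := by
    conv_lhs => rw [← Nat.div_add_mod k m]
    rw [add_comm, pow_add, Equiv.Perm.mul_apply, hperiod]
  rcases Nat.eq_zero_or_pos (k % m) with h0 | hpos
  · have hyz : y = z := by rw [← hk, hsplit, h0, pow_zero]; rfl
    exact hyz ▸ (sameCycle_iff_exists_pow _ _ _).2 ⟨m, claimB⟩
  · have hle : k % m ≤ m := le_of_lt (Nat.mod_lt _ hm0)
    exact (sameCycle_iff_exists_pow _ _ _).2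
      ⟨k % m, (claimA _ hpos hle).trans (hsplit.symm.trans hk)⟩

lemma sc_rho_pow (hsep : Separates τ N) (hsupp : ∀ x ∉ N, ρ x = x)
    {x : β} (hx : x ∈ N) : ∀ j : ℕ, (τ * ρ).SameCycle x ((ρ ^ j) x) := by
  intro j
  induction j with
  | zero => simpa using Equiv.Perm.SameCycle.refl (τ * ρ) x
  | succ j ih =>
      have hmem : (ρ ^ j) x ∈ N := pow_mem ρ N hsupp hx j
      have hstep : (ρ ^ (j + 1)) x = ρ ((ρ ^ j) x) := by
        rw [pow_succ', Equiv.Perm.mul_apply]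
      rw [hstep]
      exact ih.trans (core_traverse τ ρ N hsep hsupp hmem _ (Equiv.Perm.SameCycle.refl _ _))

lemma orbit_inv (hsep : Separates τ N) (hsupp : ∀ x ∉ N, ρ x = x)
    {x : β} (hx : x ∈ N) :
    ∀ k : ℕ, ∃ j : ℕ, τ.SameCycle (((τ * ρ) ^ k) x) ((ρ ^ j) x) := by
  intro k
  induction k with
  | zero => exact ⟨0, by simpa using Equiv.Perm.SameCycle.refl τ x⟩
  | succ k ih =>
      obtain ⟨j, hj⟩ := ih
      have hstep : ((τ * ρ) ^ (k + 1)) x = τ (ρ (((τ * ρ) ^ k) x)) := by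
        rw [pow_succ', Equiv.Perm.mul_apply, Equiv.Perm.mul_apply]
      by_cases hyN : ((τ * ρ) ^ k) x ∈ N
      · have hjN : (ρ ^ j) x ∈ N := pow_mem ρ N hsupp hx j
        have hyj : ((τ * ρ) ^ k) x = (ρ ^ j) x := hsep _ hyN _ hjN hj
        refine ⟨j + 1, ?_⟩
        have hr : ρ ((ρ ^ j) x) = (ρ ^ (j + 1)) x := by
          rw [pow_succ', Equiv.Perm.mul_apply]
        rw [hstep, hyj, hr]
        exact sc_apply_left τ _
      · refine ⟨j, ?_⟩
        rw [hstep, hsupp _ hyN]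
        exact (sc_apply_left τ _).trans hj

lemma same_orbit_N (hsep : Separates τ N) (hsupp : ∀ x ∉ N, ρ x = x)
    {x y : β} (hx : x ∈ N) (hy : y ∈ N) (h : (τ * ρ).SameCycle x y) :
    ∃ j : ℕ, (ρ ^ j) x = y := by
  obtain ⟨k, hk⟩ := (sameCycle_iff_exists_pow _ _ _).1 h
  obtain ⟨j, hj⟩ := orbit_inv τ ρ N hsep hsupp hx k
  rw [hk] at hj
  exact ⟨j, (hsep y hy _ (pow_mem ρ N hsupp hx j) hj).symm⟩

lemma off_apply (hsupp : ∀ x ∉ N, ρ x = x)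
    {x : β} (hmiss : ∀ y, τ.SameCycle x y → y ∉ N) :
    ∀ k : ℕ, ((τ * ρ) ^ k) x = (τ ^ k) x := by
  intro k
  induction k with
  | zero => rfl
  | succ k ih =>
      have h1 : (τ ^ k) x ∉ N := hmiss _ (sc_pow_right τ x k)
      have hstep : ((τ * ρ) ^ (k + 1)) x = τ (ρ (((τ * ρ) ^ k) x)) := by
        rw [pow_succ', Equiv.Perm.mul_apply, Equiv.Perm.mul_apply]
      rw [hstep, ih, hsupp _ h1, ← Equiv.Perm.mul_apply, ← pow_succ']

lemma off_sameCycle_iff (hsupp : ∀ x ∉ N, ρ x = x)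
    {x : β} (hmiss : ∀ y, τ.SameCycle x y → y ∉ N) (y : β) :
    (τ * ρ).SameCycle x y ↔ τ.SameCycle x y := by
  rw [sameCycle_iff_exists_pow, sameCycle_iff_exists_pow]
  constructor
  · rintro ⟨k, hk⟩
    exact ⟨k, by rw [← off_apply τ ρ N hsupp hmiss k]; exact hk⟩
  · rintro ⟨k, hk⟩
    exact ⟨k, by rw [off_apply τ ρ N hsupp hmiss k]; exact hk⟩

lemma meets_transfer (hsep : Separates τ N) (hsupp : ∀ x ∉ N, ρ x = x)
    {x z : β} (hz : z ∈ N) (hxz : τ.SameCycle x z) :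
    ∃ u ∈ N, (τ * ρ).SameCycle x u := by
  have hu : ρ⁻¹ z ∈ N := mem_of_apply_mem ρ⁻¹ N (inv_supp ρ N hsupp) hz
  refine ⟨ρ⁻¹ z, hu, ?_⟩
  have := core_traverse τ ρ N hsep hsupp hu x
    (by rw [Equiv.Perm.apply_inv_self]; exact hxz.symm)
  exact this.symm

lemma numCycles_mul_supported (hsep : Separates τ N) (hsupp : ∀ x ∉ N, ρ x = x) :
    numCycles (τ * ρ) + Nat.card N =
      numCycles τ + numCycles (ρ.subtypePerm (fun x => (mem_iff_apply_mem ρ N hsupp x).symm)) := by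
  classical
  set ν := ρ.subtypePerm (fun x => (mem_iff_apply_mem ρ N hsupp x).symm) with hν
  set Q1 := Quotient (sameCycleSetoid (τ * ρ)) with hQ1
  set Q2 := Quotient (sameCycleSetoid τ) with hQ2
  let p1 : Q1 → Prop := fun c => ∃ z ∈ N, (τ * ρ).SameCycle (Quotient.out c) z
  let p2 : Q2 → Prop := fun c => ∃ z ∈ N, τ.SameCycle (Quotient.out c) z
  -- E1 : cycles of ν ≃ classes of τρ meeting N
  let G1 : Quotient (sameCycleSetoid ν) → {c : Q1 // p1 c} :=
    Quotient.lift
      (fun (y : {a // a ∈ N}) =>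
        (⟨Quotient.mk _ y.1, ⟨y.1, y.2, out_sameCycle (τ * ρ) y.1⟩⟩ : {c : Q1 // p1 c}))
      (fun a b hab => Subtype.ext (Quotient.sound (by
        have h1 : ρ.SameCycle a.1 b.1 := (subtypePerm_sameCycle_iff ρ _ (mem_iff_apply_mem ρ N hsupp) a b).1 hab
        obtain ⟨j, hj⟩ := (sameCycle_iff_exists_pow ρ _ _).1 h1
        exact hj ▸ sc_rho_pow τ ρ N hsep hsupp a.2 j)))
  have hG1inj : Function.Injective G1 := by
    intro q q'
    induction q using Quotient.inductionOn with
    | h a =>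
      induction q' using Quotient.inductionOn with
      | h b =>
        intro h
        have h1 : (τ * ρ).SameCycle a.1 b.1 := Quotient.exact (congrArg Subtype.val h)
        obtain ⟨j, hj⟩ := same_orbit_N τ ρ N hsep hsupp a.2 b.2 h1
        refine Quotient.sound ?_
        show ν.SameCycle a b
        refine (sameCycle_iff_exists_pow ν a b).2 ⟨j, ?_⟩
        rw [hν, Equiv.Perm.subtypePerm_pow]
        exact Subtype.ext hj
  have hG1surj : Function.Surjective G1 := by
    rintro ⟨c, z, hzN, hz⟩
    refine ⟨Quotient.mk _ (⟨z, hzN⟩ : {a // a ∈ N}), ?_⟩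
    exact Subtype.ext (mk_eq_of_mem_class (τ * ρ) c z hz).symm
  -- E2 : classes of τ meeting N ≃ N
  let G2 : N → {c : Q2 // p2 c} := fun y =>
    ⟨Quotient.mk _ y.1, ⟨y.1, y.2, out_sameCycle τ y.1⟩⟩
  have hG2inj : Function.Injective G2 := by
    intro a b h
    have h1 : τ.SameCycle a.1 b.1 := Quotient.exact (congrArg Subtype.val h)
    exact Subtype.ext (hsep a.1 a.2 b.1 b.2 h1)
  have hG2surj : Function.Surjective G2 := by
    rintro ⟨c, z, hzN, hz⟩
    exact ⟨⟨z, hzN⟩, Subtype.ext (mk_eq_of_mem_class τ c z hz).symm⟩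
  -- E3 : classes missing N correspond
  have miss1_of_miss2 : ∀ x : β, (∀ y, τ.SameCycle x y → y ∉ N) →
      ∀ y, (τ * ρ).SameCycle x y → y ∉ N :=
    fun x hx y hy => hx y ((off_sameCycle_iff τ ρ N hsupp hx y).1 hy)
  have miss2_of_miss1 : ∀ x : β, (∀ y, (τ * ρ).SameCycle x y → y ∉ N) →
      ∀ y, τ.SameCycle x y → y ∉ N := by
    intro x hx y hy hyN
    obtain ⟨u, huN, hu⟩ := meets_transfer τ ρ N hsep hsupp hyN hy
    exact hx u hu huN
  let G3 : {c : Q1 // ¬ p1 c} → {c : Q2 // ¬ p2 c} := fun c =>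
    ⟨Quotient.mk _ (Quotient.out c.1), by
      rintro ⟨z, hzN, hz⟩
      have h0 : τ.SameCycle (Quotient.out c.1) z := (out_sameCycle τ _).symm.trans hz
      obtain ⟨u, huN, hu⟩ := meets_transfer τ ρ N hsep hsupp hzN h0
      exact c.2 ⟨u, huN, hu⟩⟩
  let G3' : {c : Q2 // ¬ p2 c} → {c : Q1 // ¬ p1 c} := fun c =>
    ⟨Quotient.mk _ (Quotient.out c.1), by
      rintro ⟨z, hzN, hz⟩
      have hmiss : ∀ y, τ.SameCycle (Quotient.out c.1) y → y ∉ N := by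
        intro y hy hyN
        exact c.2 ⟨y, hyN, hy⟩
      have h0 : (τ * ρ).SameCycle (Quotient.out c.1) z :=
        (out_sameCycle (τ * ρ) _).symm.trans hz
      exact (miss1_of_miss2 _ hmiss) z h0 hzN⟩
  have hG3 : ∀ c, G3' (G3 c) = c := by
    rintro ⟨c, hc⟩
    apply Subtype.ext
    have hmiss1 : ∀ y, (τ * ρ).SameCycle (Quotient.out c) y → y ∉ N :=
      fun y hy hyN => hc ⟨y, hyN, hy⟩
    have hmiss2 := miss2_of_miss1 _ hmiss1
    have h1 : τ.SameCycle
        (Quotient.out (Quotient.mk (sameCycleSetoid τ) (Quotient.out c)))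
        (Quotient.out c) := out_sameCycle τ _
    have hmiss2' : ∀ y, τ.SameCycle
        (Quotient.out (Quotient.mk (sameCycleSetoid τ) (Quotient.out c))) y → y ∉ N :=
      fun y hy => hmiss2 y (h1.symm.trans hy)
    have h2 : (τ * ρ).SameCycle
        (Quotient.out (Quotient.mk (sameCycleSetoid τ) (Quotient.out c)))
        (Quotient.out c) := (off_sameCycle_iff τ ρ N hsupp hmiss2' _).2 h1
    show Quotient.mk _ (Quotient.out (Quotient.mk (sameCycleSetoid τ) (Quotient.out c))) = c
    exact (Quotient.sound h2).trans (Quotient.out_eq c)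
  have hG3' : ∀ c, G3 (G3' c) = c := by
    rintro ⟨c, hc⟩
    apply Subtype.ext
    have hmiss2 : ∀ y, τ.SameCycle (Quotient.out c) y → y ∉ N :=
      fun y hy hyN => hc ⟨y, hyN, hy⟩
    have h1 : (τ * ρ).SameCycle
        (Quotient.out (Quotient.mk (sameCycleSetoid (τ * ρ)) (Quotient.out c)))
        (Quotient.out c) := out_sameCycle (τ * ρ) _
    have h2 : τ.SameCycle (Quotient.out c)
        (Quotient.out (Quotient.mk (sameCycleSetoid (τ * ρ)) (Quotient.out c))) :=
      (off_sameCycle_iff τ ρ N hsupp hmiss2 _).1 h1.symm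
    show Quotient.mk _ (Quotient.out (Quotient.mk (sameCycleSetoid (τ * ρ)) (Quotient.out c))) = c
    exact (Quotient.sound h2.symm).trans (Quotient.out_eq c)
  -- counting
  have hsplit1 : numCycles (τ * ρ) = Nat.card {c : Q1 // p1 c} + Nat.card {c : Q1 // ¬ p1 c} := by
    rw [numCycles, ← Nat.card_sum]
    exact Nat.card_congr (Equiv.sumCompl p1).symm
  have hsplit2 : numCycles τ = Nat.card {c : Q2 // p2 c} + Nat.card {c : Q2 // ¬ p2 c} := by
    rw [numCycles, ← Nat.card_sum]
    exact Nat.card_congr (Equiv.sumCompl p2).symm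
  have h1 : numCycles ν = Nat.card {c : Q1 // p1 c} :=
    Nat.card_congr (Equiv.ofBijective G1 ⟨hG1inj, hG1surj⟩)
  have h2 : Nat.card N = Nat.card {c : Q2 // p2 c} :=
    Nat.card_congr (Equiv.ofBijective G2 ⟨hG2inj, hG2surj⟩)
  have h3 : Nat.card {c : Q1 // ¬ p1 c} = Nat.card {c : Q2 // ¬ p2 c} :=
    Nat.card_congr ⟨G3, G3', hG3, hG3'⟩
  omega

end CutJoin

section Aux2

variable {β : Type*}

lemma subtypePerm_inv_mul (f g : Perm β) {p : β → Prop}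
    (hf : ∀ x, p x ↔ p (f x)) (hg : ∀ x, p x ↔ p (g x))
    (hfg : ∀ x, p x ↔ p ((f⁻¹ * g) x)) :
    (f.subtypePerm (fun x => (hf x).symm))⁻¹ * g.subtypePerm (fun x => (hg x).symm) =
      (f⁻¹ * g).subtypePerm (fun x => (hfg x).symm) := by
  rw [Equiv.Perm.inv_subtypePerm, Equiv.Perm.subtypePerm_mul]

lemma setoid_closed_sc [Finite β] (J : Setoid β) (f : Perm β)
    (hstep : ∀ a, J.r a (f a)) :
    ∀ a b, f.SameCycle a b → J.r a b := by
  intro a b h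
  obtain ⟨k, hk⟩ := (sameCycle_iff_exists_pow f a b).1 h
  rw [← hk]; clear hk h
  induction k with
  | zero => simpa using J.iseqv.refl a
  | succ k ih =>
      have hstep' : (f ^ (k + 1)) a = f ((f ^ k) a) := by
        rw [pow_succ', Equiv.Perm.mul_apply]
      rw [hstep']
      exact J.iseqv.trans ih (hstep _)

lemma sc_subordinate [Finite β] (f g : Perm β) (hstep : ∀ a, g.SameCycle a (f a)) :
    ∀ a b, f.SameCycle a b → g.SameCycle a b :=
  setoid_closed_sc (sameCycleSetoid g) f hstep

end Aux2

/-! ### Structure of `mergePerm` -/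

section Merge

lemma finRotate_of_lt {m : ℕ} {j : Fin m} (h : (j : ℕ) + 1 < m) :
    finRotate m j = ⟨(j : ℕ) + 1, h⟩ := by
  rcases m with _ | m'
  · exact j.elim0
  · have hm' : 1 ≤ m' := by omega
    apply Fin.ext
    rw [finRotate_succ_apply, Fin.add_def]
    simp only [Fin.val_one']
    have h1 : 1 % (m' + 1) = 1 := Nat.mod_eq_of_lt (by omega)
    rw [h1, Nat.mod_eq_of_lt (by omega)]

lemma finRotate_of_eq {m : ℕ} {j : Fin m} (h : (j : ℕ) + 1 = m) :
    finRotate m j = ⟨0, by omega⟩ := by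
  rcases m with _ | m'
  · exact j.elim0
  · apply Fin.ext
    rw [finRotate_succ_apply, Fin.add_def]
    simp only [Fin.val_one']
    rcases Nat.eq_zero_or_pos m' with hm | hm
    · subst hm
      simp [Nat.mod_one]
    · have h1 : 1 % (m' + 1) = 1 := Nat.mod_eq_of_lt (by omega)
      rw [h1]
      have h2 : (j : ℕ) + 1 = m' + 1 := h
      rw [h2]
      exact Nat.mod_self _

variable {ι : Type*} (n : ι → ℕ) (hn : ∀ i, 0 < n i)

lemma blockRotate_apply (x : (i : ι) × Fin (n i)) :
    blockRotate n x = ⟨x.1, finRotate (n x.1) x.2⟩ := by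
  cases x; rfl

lemma mergePerm_apply_lt (τ : Perm ι) (x : (i : ι) × Fin (n i))
    (h : (x.2 : ℕ) + 1 < n x.1) :
    mergePerm n hn τ x = ⟨x.1, ⟨(x.2 : ℕ) + 1, h⟩⟩ := by
  have hbr : blockRotate n x = ⟨x.1, ⟨(x.2 : ℕ) + 1, h⟩⟩ := by
    rw [blockRotate_apply, finRotate_of_lt h]
  show (τ.extendDomain (zeroSection n hn)) (blockRotate n x) = _
  rw [hbr]
  exact Equiv.Perm.extendDomain_apply_not_subtype _ _ (by simp)

lemma mergePerm_apply_eq (τ : Perm ι) (x : (i : ι) × Fin (n i))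
    (h : (x.2 : ℕ) + 1 = n x.1) :
    mergePerm n hn τ x = ⟨τ x.1, ⟨0, hn _⟩⟩ := by
  have hbr : blockRotate n x = ⟨x.1, ⟨0, hn _⟩⟩ := by
    rw [blockRotate_apply, finRotate_of_eq h]
  show (τ.extendDomain (zeroSection n hn)) (blockRotate n x) = _
  rw [hbr]
  rw [Equiv.Perm.extendDomain_apply_subtype _ (zeroSection n hn) (by simp : (⟨x.1, ⟨0, hn _⟩⟩ : (i : ι) × Fin (n i)).2.val = 0)]
  rfl

lemma mergePerm_fst (τ : Perm ι) (x : (i : ι) × Fin (n i)) :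
    ((mergePerm n hn τ) x).1 = x.1 ∨ ((mergePerm n hn τ) x).1 = τ x.1 := by
  by_cases h : (x.2 : ℕ) + 1 = n x.1
  · right; rw [mergePerm_apply_eq n hn τ x h]
  · left
    have hlt : (x.2 : ℕ) + 1 < n x.1 := lt_of_le_of_ne x.2.2 h
    rw [mergePerm_apply_lt n hn τ x hlt]

lemma mergePerm_sc_fst [Finite ι] (τ : Perm ι) {x y : (i : ι) × Fin (n i)}
    (h : (mergePerm n hn τ).SameCycle x y) : τ.SameCycle x.1 y.1 := by
  obtain ⟨k, hk⟩ := (sameCycle_iff_exists_pow _ _ _).1 h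
  rw [← hk]; clear hk h
  induction k with
  | zero => simpa using Equiv.Perm.SameCycle.refl τ x.1
  | succ k ih =>
      have hstep : ((mergePerm n hn τ) ^ (k + 1)) x
          = (mergePerm n hn τ) (((mergePerm n hn τ) ^ k) x) := by
        rw [pow_succ', Equiv.Perm.mul_apply]
      rw [hstep]
      rcases mergePerm_fst n hn τ (((mergePerm n hn τ) ^ k) x) with h1 | h1 <;> rw [h1]
      · exact ih
      · exact ih.trans (sc_apply_left τ _).symm

lemma mergePerm_pow_zero [Finite ι] (τ : Perm ι) (i : ι) :
    ∀ m : ℕ, (hm : m < n i) →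
      ((mergePerm n hn τ) ^ m) ⟨i, ⟨0, hn i⟩⟩ = ⟨i, ⟨m, hm⟩⟩ := by
  intro m
  induction m with
  | zero => intro hm; simp
  | succ m ih =>
      intro hm
      have hstep : ((mergePerm n hn τ) ^ (m + 1)) ⟨i, ⟨0, hn i⟩⟩
          = (mergePerm n hn τ) (((mergePerm n hn τ) ^ m) ⟨i, ⟨0, hn i⟩⟩) := by
        rw [pow_succ', Equiv.Perm.mul_apply]
      rw [hstep, ih (by omega)]
      exact mergePerm_apply_lt n hn τ ⟨i, ⟨m, by omega⟩⟩ hm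

lemma mergePerm_sc_block [Finite ι] (τ : Perm ι) (i : ι) (j : Fin (n i)) :
    (mergePerm n hn τ).SameCycle ⟨i, ⟨0, hn i⟩⟩ ⟨i, j⟩ := by
  refine (sameCycle_iff_exists_pow _ _ _).2 ⟨(j : ℕ), ?_⟩
  rw [mergePerm_pow_zero n hn τ i (j : ℕ) j.2]

lemma mergePerm_last (τ : Perm ι) (i : ι) :
    (mergePerm n hn τ) ⟨i, ⟨n i - 1, by have := hn i; omega⟩⟩ = ⟨τ i, ⟨0, hn _⟩⟩ :=
  mergePerm_apply_eq n hn τ _ (by have := hn i; simp; omega)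

lemma sigma_zero_congr {i i' : ι} (h : i = i') :
    (⟨i, ⟨0, hn i⟩⟩ : (i : ι) × Fin (n i)) = ⟨i', ⟨0, hn i'⟩⟩ := by
  subst h; rfl

lemma mergePerm_sc_step [Finite ι] (τ : Perm ι) (i : ι) :
    (mergePerm n hn τ).SameCycle ⟨i, ⟨0, hn i⟩⟩ ⟨τ i, ⟨0, hn _⟩⟩ := by
  have h1 := mergePerm_sc_block n hn τ i ⟨n i - 1, by have := hn i; omega⟩
  have h2 := mergePerm_last n hn τ i
  refine h1.trans ?_
  rw [← h2]
  exact (sc_apply_left _ _).symm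

lemma mergePerm_sc_zero [Finite ι] (τ : Perm ι) (i : ι) :
    ∀ k : ℕ, (mergePerm n hn τ).SameCycle ⟨i, ⟨0, hn i⟩⟩ ⟨(τ ^ k) i, ⟨0, hn _⟩⟩ := by
  intro k
  induction k with
  | zero => exact Equiv.Perm.SameCycle.refl (mergePerm n hn τ) _
  | succ k ih =>
      have h3 : (τ ^ (k + 1)) i = τ ((τ ^ k) i) := by
        rw [pow_succ', Equiv.Perm.mul_apply]
      have e := sigma_zero_congr n hn h3
      rw [e]
      exact ih.trans (mergePerm_sc_step n hn τ ((τ ^ k) i))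

lemma mergePerm_sameCycle_iff [Finite ι] (τ : Perm ι) (x y : (i : ι) × Fin (n i)) :
    (mergePerm n hn τ).SameCycle x y ↔ τ.SameCycle x.1 y.1 := by
  constructor
  · exact mergePerm_sc_fst n hn τ
  · intro h
    obtain ⟨k, hk⟩ := (sameCycle_iff_exists_pow _ _ _).1 h
    obtain ⟨i, j⟩ := x
    obtain ⟨i', j'⟩ := y
    simp only at hk
    have c1 : (mergePerm n hn τ).SameCycle ⟨i, ⟨0, hn i⟩⟩ ⟨i, j⟩ :=
      mergePerm_sc_block n hn τ i j
    have c2 : (mergePerm n hn τ).SameCycle ⟨i, ⟨0, hn i⟩⟩ ⟨(τ ^ k) i, ⟨0, hn _⟩⟩ :=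
      mergePerm_sc_zero n hn τ i k
    have c3 : (mergePerm n hn τ).SameCycle ⟨i', ⟨0, hn i'⟩⟩ ⟨i', j'⟩ :=
      mergePerm_sc_block n hn τ i' j'
    rw [hk] at c2
    exact c1.symm.trans (c2.trans c3)

lemma numCycles_mergePerm [Finite ι] (τ : Perm ι) :
    numCycles (mergePerm n hn τ) = numCycles τ := by
  let G : Quotient (sameCycleSetoid (mergePerm n hn τ)) → Quotient (sameCycleSetoid τ) :=
    Quotient.lift (fun x => Quotient.mk (sameCycleSetoid τ) x.1)
      (fun a b hab => Quotient.sound (mergePerm_sc_fst n hn τ hab))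
  have hGinj : Function.Injective G := by
    intro q q'
    induction q using Quotient.inductionOn with
    | h a =>
      induction q' using Quotient.inductionOn with
      | h b =>
        intro h
        exact Quotient.sound
          ((mergePerm_sameCycle_iff n hn τ a b).2 (Quotient.exact h))
  have hGsurj : Function.Surjective G := by
    intro q
    induction q using Quotient.inductionOn with
    | h i => exact ⟨Quotient.mk _ ⟨i, ⟨0, hn i⟩⟩, rfl⟩
  exact Nat.card_congr (Equiv.ofBijective G ⟨hGinj, hGsurj⟩)

lemma mergePerm_rho_off (τ π : Perm ι) (x : (i : ι) × Fin (n i))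
    (h : (x.2 : ℕ) + 1 ≠ n x.1) :
    ((mergePerm n hn π)⁻¹ * mergePerm n hn τ) x = x := by
  have hlt : (x.2 : ℕ) + 1 < n x.1 := lt_of_le_of_ne x.2.2 h
  rw [Equiv.Perm.mul_apply, mergePerm_apply_lt n hn τ x hlt,
    ← mergePerm_apply_lt n hn π x hlt, Equiv.Perm.inv_apply_self]

lemma mergePerm_rho_on (τ π : Perm ι) (x : (i : ι) × Fin (n i))
    (h : (x.2 : ℕ) + 1 = n x.1) :
    ((mergePerm n hn π)⁻¹ * mergePerm n hn τ) x
      = ⟨(π⁻¹ * τ) x.1, ⟨n ((π⁻¹ * τ) x.1) - 1, by have := hn ((π⁻¹ * τ) x.1); omega⟩⟩ := by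
  rw [Equiv.Perm.mul_apply, mergePerm_apply_eq n hn τ x h, Equiv.Perm.inv_eq_iff_eq,
    mergePerm_last n hn π ((π⁻¹ * τ) x.1)]
  have hπ : π ((π⁻¹ * τ) x.1) = τ x.1 := by simp [Equiv.Perm.mul_apply]
  rw [hπ]

end Merge

/-- if `π ∈ S_NC(r,s,t)`, `σ ≤ π_{\vec n}` and on each cycle `C̃` of
`π_{\vec n}` the restriction `σ|_{C̃}` is non-crossing with respect to the cycle
`C̃` and `(σ|_{C̃})⁻¹ ⋅ C̃` separates `N ∩ C̃`, then `σ ∈ S_NC(p,q,l)` and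
`σ⁻¹π_{\vec n}` separates `N`. -/
theorem stmt18 (r s t : ℕ) (n : ((i : Fin 3) × Fin (![r, s, t] i)) → ℕ)
    (hn : ∀ x, 0 < n x)
    (N : Set ((x : (i : Fin 3) × Fin (![r, s, t] i)) × Fin (n x)))
    (hN : N = {y | y.2.val = n y.1 - 1})
    (π : Equiv.Perm ((i : Fin 3) × Fin (![r, s, t] i)))
    (hπ : SNC (blockRotate ![r, s, t]) π)
    (σ : Equiv.Perm ((x : (i : Fin 3) × Fin (![r, s, t] i)) × Fin (n x)))
    (h1 : le' σ (mergePerm n hn π))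
    (h2 : ∀ x,
      SNC (restrictPerm (mergePerm n hn π) ((mergePerm n hn π).SameCycle x))
        (restrictPerm σ ((mergePerm n hn π).SameCycle x)) ∧
      Separates
        ((restrictPerm σ ((mergePerm n hn π).SameCycle x))⁻¹ *
          restrictPerm (mergePerm n hn π) ((mergePerm n hn π).SameCycle x))
        (Subtype.val ⁻¹' N)) :
    SNC (mergePerm n hn (blockRotate ![r, s, t])) σ ∧
    Separates (σ⁻¹ * mergePerm n hn π) N := by
  classical
  -- membership in N
  have hmemN : ∀ x, x ∈ N ↔ (x.2 : ℕ) + 1 = n x.1 := by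
    intro x
    rw [hN]
    simp only [Set.mem_setOf_eq]
    have h1 := hn x.1
    have h2 := x.2.2
    omega
  -- σ-cycles sit inside cycles of π̃
  have hσπ : ∀ x y, σ.SameCycle x y → (mergePerm n hn π).SameCycle x y := h1.1
  have hstep_m : ∀ a, (mergePerm n hn π).SameCycle a ((σ⁻¹ * mergePerm n hn π) a) := by
    intro a
    have ha : (mergePerm n hn π).SameCycle a ((mergePerm n hn π) a) :=
      (sc_apply_left _ a).symm
    have hb : σ.SameCycle ((mergePerm n hn π) a) (σ⁻¹ ((mergePerm n hn π) a)) := by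
      have h := sc_apply_left σ (σ⁻¹ ((mergePerm n hn π) a))
      rwa [Equiv.Perm.apply_inv_self] at h
    exact ha.trans (hσπ _ _ hb)
  have hsub : ∀ a b, (σ⁻¹ * mergePerm n hn π).SameCycle a b →
      (mergePerm n hn π).SameCycle a b :=
    sc_subordinate _ _ hstep_m
  -- invariance of cycle classes of π̃
  have hpσ : ∀ x₀ y, (mergePerm n hn π).SameCycle x₀ y ↔
      (mergePerm n hn π).SameCycle x₀ (σ y) :=
    fun x₀ => class_invariant σ (mergePerm n hn π) hσπ x₀
  have hpπ : ∀ x₀ y, (mergePerm n hn π).SameCycle x₀ y ↔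
      (mergePerm n hn π).SameCycle x₀ ((mergePerm n hn π) y) :=
    fun x₀ => class_invariant (mergePerm n hn π) (mergePerm n hn π) (fun _ _ h => h) x₀
  have hpm : ∀ x₀ y, (mergePerm n hn π).SameCycle x₀ y ↔
      (mergePerm n hn π).SameCycle x₀ ((σ⁻¹ * mergePerm n hn π) y) :=
    fun x₀ => class_invariant (σ⁻¹ * mergePerm n hn π) (mergePerm n hn π) hsub x₀
  -- Part (ii): separation
  have hsepN : Separates (σ⁻¹ * mergePerm n hn π) N := by
    intro x hx y hy hxy
    have hπxy : (mergePerm n hn π).SameCycle x y := hsub _ _ hxy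
    have hsep2 := (h2 x).2
    rw [restrictPerm_eq_subtypePerm σ _ (hpσ x),
      restrictPerm_eq_subtypePerm (mergePerm n hn π) _ (hpπ x),
      subtypePerm_inv_mul σ (mergePerm n hn π) (hpσ x) (hpπ x) (hpm x)] at hsep2
    have hsc : ((σ⁻¹ * mergePerm n hn π).subtypePerm (fun y => (hpm x y).symm)).SameCycle
        ⟨x, Equiv.Perm.SameCycle.refl _ _⟩ ⟨y, hπxy⟩ :=
      (subtypePerm_sameCycle_iff _ _ (hpm x) _ _).2 hxy
    have heq := hsep2 ⟨x, Equiv.Perm.SameCycle.refl _ _⟩ hx ⟨y, hπxy⟩ hy hsc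
    exact congrArg Subtype.val heq
  -- Counting over the cycles of π̃
  have key1 : numCycles σ + numCycles (σ⁻¹ * mergePerm n hn π)
      = Nat.card ((x : (i : Fin 3) × Fin (![r, s, t] i)) × Fin (n x))
        + numCycles (mergePerm n hn π) := by
    letI : Fintype (Quotient (sameCycleSetoid (mergePerm n hn π))) := Fintype.ofFinite _
    rw [numCycles_eq_sum σ (mergePerm n hn π) hσπ,
      numCycles_eq_sum (σ⁻¹ * mergePerm n hn π) (mergePerm n hn π) hsub,
      ← Finset.sum_add_distrib, card_eq_sum_classes (mergePerm n hn π),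
      numCycles_eq_card_univ (mergePerm n hn π), ← Finset.sum_add_distrib]
    apply Finset.sum_congr rfl
    intro c _
    have h12 := h1.2 (Quotient.out c)
    rw [restrictPerm_eq_subtypePerm σ _ (hpσ (Quotient.out c)),
      restrictPerm_eq_subtypePerm (mergePerm n hn π) _ (hpπ (Quotient.out c)),
      subtypePerm_inv_mul σ (mergePerm n hn π) (hpσ (Quotient.out c)) (hpπ (Quotient.out c))
        (hpm (Quotient.out c))] at h12
    exact h12
  -- the cut-and-join step
  have hsupp : ∀ x ∉ N,
      ((mergePerm n hn π)⁻¹ * mergePerm n hn (blockRotate ![r, s, t])) x = x := by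
    intro x hx
    refine mergePerm_rho_off n hn (blockRotate ![r, s, t]) π x ?_
    intro hc
    exact hx ((hmemN x).2 hc)
  have hcut := numCycles_mul_supported (σ⁻¹ * mergePerm n hn π)
      ((mergePerm n hn π)⁻¹ * mergePerm n hn (blockRotate ![r, s, t])) N hsepN hsupp
  have hassoc : (σ⁻¹ * mergePerm n hn π) *
      ((mergePerm n hn π)⁻¹ * mergePerm n hn (blockRotate ![r, s, t]))
      = σ⁻¹ * mergePerm n hn (blockRotate ![r, s, t]) := by
    group
  rw [hassoc] at hcut
  -- N is equivariantly the index type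
  let eN : N ≃ ((i : Fin 3) × Fin (![r, s, t] i)) :=
    { toFun := fun y => y.1.1
      invFun := fun i =>
        ⟨⟨i, ⟨n i - 1, by have := hn i; omega⟩⟩,
          (hmemN _).2 (by have := hn i; simp only []; omega)⟩
      left_inv := fun y => by
        apply Subtype.ext
        obtain ⟨⟨i, j⟩, hj⟩ := y
        have hj' : (j : ℕ) + 1 = n i := (hmemN ⟨i, j⟩).1 hj
        exact congrArg (Sigma.mk i) (Fin.ext (by simp only []; omega))
      right_inv := fun i => rfl }
  have hcardN : Nat.card N = Nat.card ((i : Fin 3) × Fin (![r, s, t] i)) :=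
    Nat.card_congr eN
  have hν : numCycles
      ((((mergePerm n hn π)⁻¹ * mergePerm n hn (blockRotate ![r, s, t]))).subtypePerm
        (fun x => (mem_iff_apply_mem _ N hsupp x).symm))
      = numCycles (π⁻¹ * blockRotate ![r, s, t]) := by
    apply numCycles_congr eN
    intro y
    have hy : (y.1.2 : ℕ) + 1 = n y.1.1 := (hmemN y.1).1 y.2
    have hr := mergePerm_rho_on n hn (blockRotate ![r, s, t]) π y.1 hy
    show ((((mergePerm n hn π)⁻¹ * mergePerm n hn (blockRotate ![r, s, t])) y.1)).1
        = (π⁻¹ * blockRotate ![r, s, t]) y.1.1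
    rw [hr]
  rw [hν, hcardN] at hcut
  have hπc : numCycles (mergePerm n hn π) = numCycles π := numCycles_mergePerm n hn π
  have hγc : numCycles (mergePerm n hn (blockRotate ![r, s, t]))
      = numCycles (blockRotate ![r, s, t]) := numCycles_mergePerm n hn _
  have hπ2 : numCycles π + numCycles (π⁻¹ * blockRotate ![r, s, t])
      + numCycles (blockRotate ![r, s, t])
      = Nat.card ((i : Fin 3) × Fin (![r, s, t] i)) + 2 := hπ.2
  -- Part (i): JoinTop
  have hJtop : JoinTop σ (mergePerm n hn (blockRotate ![r, s, t])) := by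
    have jrσ : ∀ a b, σ.SameCycle a b →
        (joinSetoid σ (mergePerm n hn (blockRotate ![r, s, t]))).r a b := fun a b h =>
      Setoid.le_def.1
        (le_sup_left (a := sameCycleSetoid σ)
          (b := sameCycleSetoid (mergePerm n hn (blockRotate ![r, s, t])))) h
    have jrγ : ∀ a b, (mergePerm n hn (blockRotate ![r, s, t])).SameCycle a b →
        (joinSetoid σ (mergePerm n hn (blockRotate ![r, s, t]))).r a b := fun a b h =>
      Setoid.le_def.1
        (le_sup_right (a := sameCycleSetoid σ)
          (b := sameCycleSetoid (mergePerm n hn (blockRotate ![r, s, t])))) h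
    set J := joinSetoid σ (mergePerm n hn (blockRotate ![r, s, t])) with hJdef
    have jmul : ∀ a b, (σ⁻¹ * mergePerm n hn (blockRotate ![r, s, t])).SameCycle a b →
        J.r a b := by
      apply setoid_closed_sc
      intro a
      have s1 : J.r a ((mergePerm n hn (blockRotate ![r, s, t])) a) :=
        jrγ _ _ (sc_apply_left _ a).symm
      have s2 : σ.SameCycle ((mergePerm n hn (blockRotate ![r, s, t])) a)
          (σ⁻¹ ((mergePerm n hn (blockRotate ![r, s, t])) a)) := by
        have h := sc_apply_left σ (σ⁻¹ ((mergePerm n hn (blockRotate ![r, s, t])) a))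
        rwa [Equiv.Perm.apply_inv_self] at h
      exact J.iseqv.trans s1 (jrσ _ _ s2)
    have hA : ∀ x : (x : (i : Fin 3) × Fin (![r, s, t] i)) × Fin (n x),
        J.r x ⟨x.1, ⟨0, hn x.1⟩⟩ := by
      intro x
      exact jrγ _ _ ((mergePerm_sameCycle_iff n hn (blockRotate ![r, s, t]) x _).2
        (Equiv.Perm.SameCycle.refl _ _))
    have hB : ∀ i, J.r ⟨i, ⟨0, hn i⟩⟩ ⟨(blockRotate ![r, s, t]) i, ⟨0, hn _⟩⟩ := by
      intro i
      exact jrγ _ _ ((mergePerm_sameCycle_iff n hn (blockRotate ![r, s, t]) _ _).2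
        (sc_apply_left (blockRotate ![r, s, t]) i).symm)
    have hC : ∀ i, J.r ⟨i, ⟨0, hn i⟩⟩
        ⟨(π⁻¹ * blockRotate ![r, s, t]) i, ⟨0, hn _⟩⟩ := by
      intro i
      have hxN : (⟨i, ⟨n i - 1, by have := hn i; omega⟩⟩ :
          (x : (i : Fin 3) × Fin (![r, s, t] i)) × Fin (n x)) ∈ N :=
        (hmemN _).2 (by have := hn i; simp only []; omega)
      have hsc1 := core_traverse (σ⁻¹ * mergePerm n hn π)
        ((mergePerm n hn π)⁻¹ * mergePerm n hn (blockRotate ![r, s, t])) N hsepN hsupp hxN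
        _ (Equiv.Perm.SameCycle.refl _ _)
      rw [hassoc] at hsc1
      have hρx := mergePerm_rho_on n hn (blockRotate ![r, s, t]) π
        ⟨i, ⟨n i - 1, by have := hn i; omega⟩⟩ (by have := hn i; simp only []; omega)
      rw [hρx] at hsc1
      have j1 := jmul _ _ hsc1
      have j0 : J.r ⟨i, ⟨0, hn i⟩⟩ ⟨i, ⟨n i - 1, by have := hn i; omega⟩⟩ :=
        J.iseqv.symm (hA ⟨i, ⟨n i - 1, by have := hn i; omega⟩⟩)
      have j2 := hA ⟨(π⁻¹ * blockRotate ![r, s, t]) i,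
        ⟨n ((π⁻¹ * blockRotate ![r, s, t]) i) - 1,
          by have := hn ((π⁻¹ * blockRotate ![r, s, t]) i); omega⟩⟩
      exact J.iseqv.trans j0 (J.iseqv.trans j1 j2)
    let K : Setoid ((i : Fin 3) × Fin (![r, s, t] i)) :=
      { r := fun i i' => J.r ⟨i, ⟨0, hn i⟩⟩ ⟨i', ⟨0, hn i'⟩⟩
        iseqv := ⟨fun i => J.iseqv.refl _, fun h => J.iseqv.symm h,
          fun h h' => J.iseqv.trans h h'⟩ }
    have hKγ : ∀ a b, (blockRotate ![r, s, t]).SameCycle a b → K.r a b :=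
      setoid_closed_sc K (blockRotate ![r, s, t]) hB
    have hu : ∀ i, K.r i ((π⁻¹ * blockRotate ![r, s, t]) i) := hC
    have hu' : ∀ i, K.r i ((π⁻¹ * blockRotate ![r, s, t])⁻¹ i) := by
      intro i
      refine K.iseqv.symm ?_
      have h := hu ((π⁻¹ * blockRotate ![r, s, t])⁻¹ i)
      rwa [Equiv.Perm.apply_inv_self] at h
    have hπstep : ∀ i, K.r i (π i) := by
      intro i
      have hk1 : K.r i ((π⁻¹ * blockRotate ![r, s, t])⁻¹ i) := hu' i
      have hk2 : K.r ((π⁻¹ * blockRotate ![r, s, t])⁻¹ i)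
          ((blockRotate ![r, s, t]) ((π⁻¹ * blockRotate ![r, s, t])⁻¹ i)) := hB _
      have h3 : (blockRotate ![r, s, t]) ((π⁻¹ * blockRotate ![r, s, t])⁻¹ i) = π i := by
        simp [mul_inv_rev, Equiv.Perm.mul_apply]
      rw [h3] at hk2
      exact K.iseqv.trans hk1 hk2
    have hKπ : ∀ a b, π.SameCycle a b → K.r a b := setoid_closed_sc K π hπstep
    have hle : joinSetoid π (blockRotate ![r, s, t]) ≤ K :=
      sup_le (Setoid.le_def.2 (fun {a b} h => hKπ a b h))
        (Setoid.le_def.2 (fun {a b} h => hKγ a b h))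
    have hK : ∀ i i', K.r i i' := fun i i' => Setoid.le_def.1 hle (hπ.1 i i')
    intro x y
    exact J.iseqv.trans (hA x) (J.iseqv.trans (hK x.1 y.1) (J.iseqv.symm (hA y)))
  refine ⟨⟨hJtop, ?_⟩, hsepN⟩
  omega

end ThirdOrderFree
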